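/- Fix n ≥ 2 and define, on n × n complex matrices, Φ(A) = det(A) • A⁻¹ and Ψ(B) = ((det B).re)^(1/(n−1)) • B⁻¹ (real power of the positive real (det B).re). Then: (i) for every positive definite A, Φ(A) is positive definite and Ψ(Φ(A)) = A; (ii) for every positive definite B, Ψ(B) is positive definite and Φ(Ψ(B)) = B. Consequently Φ is a bijection from the set of positive definite n × n complex matrices onto itself. -/

import Mathlib

open scoped ComplexOrder

open Matrix in
lemma smul_posDef_aux {n : ℕ} {c : ℝ} (hc : 0 < c) {M : Matrix (Fin n) (Fin n) ℂ}
    (hM : M.PosDef) : ((c : ℂ) • M).PosDef := by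
  refine ⟨?_, fun x hx => ?_⟩
  · rw [Matrix.IsHermitian, conjTranspose_smul, Complex.star_def, Complex.conj_ofReal, hM.1.eq]
  · convert mul_pos (Complex.zero_lt_real.mpr hc) (hM.2 hx) using 1
    simp only [Finsupp.sum, Finset.mul_sum, Matrix.smul_apply, smul_eq_mul]
    exact Finset.sum_congr rfl fun i _ => Finset.sum_congr rfl fun j _ => by ring

/-- `Φ(A) = det A • A⁻¹` (the adjugate, for positive definite `A`). -/
noncomputable def PhiMap (n : ℕ) (A : Matrix (Fin n) (Fin n) ℂ) : Matrix (Fin n) (Fin n) ℂ :=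
  A.det • A⁻¹

/-- `Ψ(B) = ((det B).re)^(1/(n-1)) • B⁻¹` (real power of the positive real `(det B).re`). -/
noncomputable def PsiMap (n : ℕ) (B : Matrix (Fin n) (Fin n) ℂ) : Matrix (Fin n) (Fin n) ℂ :=
  ((B.det.re) ^ (1 / ((n : ℝ) - 1)) : ℝ) • B⁻¹

theorem stmt_3 (n : ℕ) (hn : 2 ≤ n) :
    (∀ A : Matrix (Fin n) (Fin n) ℂ, A.PosDef →
        (PhiMap n A).PosDef ∧ PsiMap n (PhiMap n A) = A) ∧
    (∀ B : Matrix (Fin n) (Fin n) ℂ, B.PosDef →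
        (PsiMap n B).PosDef ∧ PhiMap n (PsiMap n B) = B) ∧
    Set.BijOn (PhiMap n) {A : Matrix (Fin n) (Fin n) ℂ | A.PosDef}
      {A : Matrix (Fin n) (Fin n) ℂ | A.PosDef} := by
  have hcast : ((n - 1 : ℕ) : ℝ) = (n : ℝ) - 1 := by
    rw [Nat.cast_sub (by omega)]; norm_num
  have hne : (n : ℝ) - 1 ≠ 0 := by
    have : (2:ℝ) ≤ n := by exact_mod_cast hn
    linarith
  -- scalar-smul helper facts
  have hdet_smul : ∀ (c : ℝ) (M : Matrix (Fin n) (Fin n) ℂ),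
      ((c : ℂ) • M).det = (c : ℂ) ^ n * M.det := by
    intro c M; rw [Matrix.det_smul]; simp
  have hinv_smul : ∀ (c : ℝ), 0 < c → ∀ (M : Matrix (Fin n) (Fin n) ℂ), IsUnit M.det →
      ((c : ℂ) • M)⁻¹ = ((c : ℂ))⁻¹ • M⁻¹ := by
    intro c hc M hM
    have hcne : (c : ℂ) ≠ 0 := by exact_mod_cast hc.ne'
    have : Invertible (c : ℂ) := invertibleOfNonzero hcne
    rw [Matrix.inv_smul (A := M) (c:ℂ) hM, invOf_eq_inv]
  have hrsmul : ∀ (c : ℝ) (M : Matrix (Fin n) (Fin n) ℂ), c • M = (c : ℂ) • M := by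
    intro c M; ext i j; simp [Complex.real_smul]
  have key1 : ∀ A : Matrix (Fin n) (Fin n) ℂ, A.PosDef →
      (PhiMap n A).PosDef ∧ PsiMap n (PhiMap n A) = A := by
    intro A hA
    set d : ℝ := A.det.re with hd_def
    have hdpos : 0 < d := by
      have := hA.det_pos
      rw [Complex.lt_def] at this; exact this.1
    have hdet : A.det = (d : ℂ) := by
      have := hA.det_pos
      rw [Complex.lt_def] at this
      exact Complex.ext rfl (by simpa using this.2.symm)
    have hunit : IsUnit A.det := hA.isUnit.map (Matrix.detMonoidHom)
    have hunit' : IsUnit A.det := by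
      rw [← Matrix.isUnit_iff_isUnit_det]; exact hA.isUnit
    have hPhi : PhiMap n A = (d : ℂ) • A⁻¹ := by rw [PhiMap, hdet]
    have hpos : (PhiMap n A).PosDef := hPhi ▸ smul_posDef_aux hdpos hA.inv
    refine ⟨hpos, ?_⟩
    have hdetinv : (A⁻¹).det = ((d:ℂ))⁻¹ := by rw [Matrix.det_nonsing_inv, hdet]; simp
    have hdetPhi : (PhiMap n A).det = ((d ^ (n-1) : ℝ) : ℂ) := by
      rw [hPhi, hdet_smul, hdetinv]
      push_cast
      rw [pow_sub₀ _ (by exact_mod_cast hdpos.ne' : (d:ℂ) ≠ 0) (by omega : 1 ≤ n), pow_one]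
    have hre : (PhiMap n A).det.re = d ^ (n-1) := by rw [hdetPhi, Complex.ofReal_re]
    have hPhiInv : (PhiMap n A)⁻¹ = ((d:ℂ))⁻¹ • A := by
      rw [hPhi, hinv_smul d hdpos A⁻¹ (hdetinv ▸ (isUnit_iff_ne_zero.mpr (by
        simp [Complex.ofReal_ne_zero]; exact hdpos.ne'))),
        Matrix.nonsing_inv_nonsing_inv _ hunit']
    have hrexp : (d ^ (n-1) : ℝ) ^ (1 / ((n:ℝ) - 1)) = d := by
      rw [← Real.rpow_natCast d (n-1), ← Real.rpow_mul hdpos.le, hcast,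
        mul_one_div, div_self hne, Real.rpow_one]
    rw [PsiMap, hre, hrexp, hPhiInv, hrsmul, smul_smul,
      mul_inv_cancel₀ (by exact_mod_cast hdpos.ne'), one_smul]
  have key2 : ∀ B : Matrix (Fin n) (Fin n) ℂ, B.PosDef →
      (PsiMap n B).PosDef ∧ PhiMap n (PsiMap n B) = B := by
    intro B hB
    set d : ℝ := B.det.re with hd_def
    have hdpos : 0 < d := by
      have := hB.det_pos; rw [Complex.lt_def] at this; exact this.1
    have hdet : B.det = (d : ℂ) := by
      have := hB.det_pos; rw [Complex.lt_def] at this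
      exact Complex.ext rfl (by simpa using this.2.symm)
    have hunit : IsUnit B.det := by
      rw [← Matrix.isUnit_iff_isUnit_det]; exact hB.isUnit
    set r : ℝ := d ^ (1 / ((n:ℝ) - 1)) with hr_def
    have hrpos : 0 < r := Real.rpow_pos_of_pos hdpos _
    have hrpow : r ^ (n - 1) = d := by
      rw [hr_def, ← Real.rpow_natCast _ (n-1), ← Real.rpow_mul hdpos.le, hcast,
        one_div_mul_cancel hne, Real.rpow_one]
    have hPsi : PsiMap n B = (r : ℂ) • B⁻¹ := by rw [PsiMap, hrsmul]
    have hpos : (PsiMap n B).PosDef := hPsi ▸ smul_posDef_aux hrpos hB.inv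
    refine ⟨hpos, ?_⟩
    have hdetinv : (B⁻¹).det = ((d:ℂ))⁻¹ := by rw [Matrix.det_nonsing_inv, hdet]; simp
    have hdetPsi : (PsiMap n B).det = (r:ℂ) ^ n * ((d:ℂ))⁻¹ := by
      rw [hPsi, hdet_smul, hdetinv]
    have hPsiInv : (PsiMap n B)⁻¹ = ((r:ℂ))⁻¹ • B := by
      rw [hPsi, hinv_smul r hrpos B⁻¹ (hdetinv ▸ isUnit_iff_ne_zero.mpr (by
        simp [Complex.ofReal_ne_zero]; exact hdpos.ne')),
        Matrix.nonsing_inv_nonsing_inv _ hunit]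
    have hrC : ((r:ℂ)) ^ (n-1) = (d : ℂ) := by exact_mod_cast congrArg (Complex.ofReal) hrpow
    have hscal : ((r:ℂ) ^ n * ((d:ℂ))⁻¹) * ((r:ℂ))⁻¹ = 1 := by
      have hn' : n = (n - 1) + 1 := by omega
      rw [hn', pow_succ, hrC]
      field_simp
    rw [PhiMap, hdetPsi, hPsiInv, smul_smul, hscal, one_smul]
  refine ⟨key1, key2, ⟨fun A hA => (key1 A hA).1, fun A hA B hB hAB => ?_, fun B hB => ?_⟩⟩
  · have := congrArg (PsiMap n) hAB
    rwa [(key1 A hA).2, (key1 B hB).2] at this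
  · exact ⟨PsiMap n B, (key2 B hB).1, (key2 B hB).2⟩
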